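/- Every retract of a category free on a (finite) graph is itself free on a graph. More precisely: let G be a graph, G* the free category on G, and suppose 𝒟 is a category admitting functors K : 𝒟 → G* and F' : G* → 𝒟 with F' ∘ K = id_𝒟. Let H be the graph whose edges are the irreducible arrows of 𝒟 (nonidentity arrows f such that in any factorization f = g h, either g or h is an identity). Then the canonical functor H* → 𝒟 is an isomorphism. -/

import Mathlib

open CategoryTheory

universe v u w

namespace FreeRetract

variable {D : Type u} [Category.{v} D]

/-- An arrow is "an identity" (up to the strict equality of its endpoints). -/
def IsIdentityArrow {X Z : D} (h : X ⟶ Z) : Prop :=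
  ∃ e : X = Z, h = eqToHom e

/-- An arrow is irreducible if it is not an identity and in any factorization one of the
two factors is an identity. -/
def Irreducible {X Y : D} (f : X ⟶ Y) : Prop :=
  ¬ IsIdentityArrow f ∧
    ∀ (Z : D) (h : X ⟶ Z) (g : Z ⟶ Y), f = h ≫ g → IsIdentityArrow h ∨ IsIdentityArrow g

/-- The graph (quiver) of irreducible arrows of a category `D`, on the objects of `D`. -/
def IrrGraph (D : Type u) [Category.{v} D] : Type u := D

instance : Quiver.{v} (IrrGraph D) where
  Hom X Y := { f : (show D from X) ⟶ (show D from Y) // Irreducible f }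

/-- The canonical prefunctor from the graph of irreducible arrows into `D`. -/
def irrPrefunctor (D : Type u) [Category.{v} D] : Prefunctor.{v, v} (IrrGraph D) D where
  obj X := X
  map f := f.1

end FreeRetract

open FreeRetract

section Aux

/-- suffix comparison lemma in free categories -/
lemma path_suffix {V : Type*} [Quiver V] {x w : V} :
    ∀ {y : V} (A : Quiver.Path y w) {z : V} (B : Quiver.Path z w),
      A.length ≤ B.length → ∀ (P : Quiver.Path x y) (Q : Quiver.Path x z),
      P.comp A = Q.comp B → ∃ T : Quiver.Path z y, B = T.comp A ∧ P = Q.comp T := by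
  intro y A
  induction A with
  | nil =>
    intro z B _ P Q h
    exact ⟨B, (B.comp_nil).symm, by simpa using h⟩
  | @cons m w A₀ e ih =>
    intro z B hlen P Q h
    cases B with
    | nil => simp at hlen
    | @cons m' _ B₀ e' =>
      rw [Quiver.Path.comp_cons, Quiver.Path.comp_cons, Quiver.Path.cons.injEq] at h
      obtain ⟨hb, hp, he⟩ := h
      subst hb
      rw [heq_iff_eq] at hp he
      simp only [Quiver.Path.length_cons, Nat.add_le_add_iff_right] at hlen
      obtain ⟨T, hB, hP⟩ := ih B₀ hlen P Q hp
      exact ⟨T, by rw [hB, he, Quiver.Path.comp_cons], hP⟩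

universe x₁ x₂

lemma hom_len_zero {V : Type x₂} [Quiver.{x₁} V] {u v : Paths V} (p : u ⟶ v)
    (h : Quiver.Path.length p = 0) : ∃ e : u = v, p = eqToHom e := by
  change Quiver.Path (V := V) u v at p
  cases p with
  | nil => exact ⟨rfl, rfl⟩
  | cons p e => simp [Quiver.Path.length] at h

variable {G : Type w} [Quiver.{v} G] {D : Type u} [Category.{v} D]
  (K : D ⥤ Paths G) (F' : Paths G ⥤ D) (hretr : K ⋙ F' = 𝟭 D)

include K F' hretr

lemma retr_eq {X Y : D} (f : X ⟶ Y) :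
    f = eqToHom (Functor.congr_obj hretr X).symm ≫ F'.map (K.map f) ≫
      eqToHom (Functor.congr_obj hretr Y) := by
  rw [← Functor.comp_map, Functor.congr_hom hretr f]
  simp

lemma retr_eq' {X Y : D} (f : X ⟶ Y) :
    F'.map (K.map f) = eqToHom (Functor.congr_obj hretr X) ≫ f ≫
      eqToHom (Functor.congr_obj hretr Y).symm := by
  rw [← Functor.comp_map]
  exact Functor.congr_hom hretr f

omit F' hretr in
lemma len_comp {X Y Z : D} (f : X ⟶ Y) (g : Y ⟶ Z) :
    (K.map (f ≫ g)).length = (K.map f).length + (K.map g).length := by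
  rw [K.map_comp]
  exact Quiver.Path.length_comp (K.map f) (K.map g)

lemma isId_of_len_zero {X Y : D} (f : X ⟶ Y) (h : (K.map f).length = 0) :
    IsIdentityArrow f := by
  obtain ⟨e, he⟩ := hom_len_zero (K.map f) h
  have hXY : X = Y := by
    have h1 := Functor.congr_obj hretr X
    have h2 := Functor.congr_obj hretr Y
    have : F'.obj (K.obj X) = F'.obj (K.obj Y) := congrArg F'.obj e
    exact h1.symm.trans (this.trans h2)
  refine ⟨hXY, ?_⟩
  have hf := retr_eq K F' hretr f
  rw [he, eqToHom_map] at hf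
  rw [hf]
  simp

omit F' hretr in
lemma len_zero_of_isId {X Y : D} (f : X ⟶ Y) (h : IsIdentityArrow f) :
    (K.map f).length = 0 := by
  obtain ⟨e, rfl⟩ := h
  subst e
  have : K.map (eqToHom (rfl : X = X)) = 𝟙 (K.obj X) := by simp
  rw [this]
  rfl

lemma one_le_len {X Y : D} (f : X ⟶ Y) (h : ¬ IsIdentityArrow f) :
    1 ≤ (K.map f).length := by
  by_contra hc
  exact h (isId_of_len_zero K F' hretr f (by omega))

/-- the key "equidivisibility of irreducibles" lemma -/
lemma key {X U V Y : D} (P : X ⟶ U) (a : U ⟶ Y) (Q : X ⟶ V) (b : V ⟶ Y)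
    (ha : Irreducible a) (hb : Irreducible b) (hcomp : P ≫ a = Q ≫ b)
    (hlen : (K.map a).length ≤ (K.map b).length) :
    ∃ e : V = U, b = eqToHom e ≫ a ∧ P = Q ≫ eqToHom e := by
  have hK : (K.map P).comp (K.map a) = (K.map Q).comp (K.map b) := by
    have h1 : K.map (P ≫ a) = K.map (Q ≫ b) := congrArg _ hcomp
    rw [K.map_comp, K.map_comp] at h1
    exact h1
  obtain ⟨T, hB, hP⟩ := path_suffix (K.map a) (K.map b) hlen (K.map P) (K.map Q) hK
  have hB' : K.map b = T ≫ K.map a := hB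
  have hP' : K.map P = K.map Q ≫ T := hP
  have hb' : b = (eqToHom (Functor.congr_obj hretr V).symm ≫ F'.map T ≫
      eqToHom (Functor.congr_obj hretr U)) ≫ a := by
    conv_lhs => rw [retr_eq K F' hretr b]
    rw [hB', F'.map_comp, retr_eq' K F' hretr a]
    simp
  rcases hb.2 U _ a hb' with hL | hA
  · obtain ⟨e, hLe⟩ := hL
    refine ⟨e, by rw [hb', hLe], ?_⟩
    have hFT : F'.map T = eqToHom (Functor.congr_obj hretr V) ≫ eqToHom e ≫
        eqToHom (Functor.congr_obj hretr U).symm := by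
      rw [← hLe]
      simp
    rw [retr_eq K F' hretr P, hP', F'.map_comp, retr_eq' K F' hretr Q, hFT]
    simp
  · exact absurd hA ha.1

lemma decompose : ∀ (n : ℕ) {X Y : D} (f : X ⟶ Y), (K.map f).length = n →
    ∃ p : (show Paths (IrrGraph D) from X) ⟶ (show Paths (IrrGraph D) from Y),
      (Paths.lift (irrPrefunctor D)).map p = f := by
  intro n
  induction n using Nat.strong_induction_on with
  | _ n ih =>
  intro X Y f hf
  by_cases hid : IsIdentityArrow f
  · obtain ⟨e, rfl⟩ := hid
    subst e
    exact ⟨𝟙 _, rfl⟩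
  by_cases hirr : Irreducible f
  · exact ⟨Quiver.Path.nil.cons ⟨f, hirr⟩,
      by simp only [Paths.lift_cons, Paths.lift_nil]; exact Category.id_comp f⟩
  · rw [FreeRetract.Irreducible, not_and_or] at hirr
    rcases hirr with h1 | h2
    · exact absurd (not_not.mp h1) hid
    · push_neg at h2
      obtain ⟨Z, g1, g2, hfact, hg1, hg2⟩ := h2
      have l1 := one_le_len K F' hretr g1 hg1
      have l2 := one_le_len K F' hretr g2 hg2
      have hsum : (K.map g1).length + (K.map g2).length = n := by
        rw [← hf, hfact]
        exact (len_comp K g1 g2).symm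
      obtain ⟨p1, hp1⟩ := ih (K.map g1).length (by omega) g1 rfl
      obtain ⟨p2, hp2⟩ := ih (K.map g2).length (by omega) g2 rfl
      exact ⟨p1 ≫ p2, by rw [Functor.map_comp, hp1, hp2, hfact]; rfl⟩

lemma faith : ∀ (n : ℕ) {X Y : Paths (IrrGraph D)} (p q : X ⟶ Y),
    (K.map ((Paths.lift (irrPrefunctor D)).map p)).length = n →
    (Paths.lift (irrPrefunctor D)).map p = (Paths.lift (irrPrefunctor D)).map q →
    p = q := by
  intro n
  induction n using Nat.strong_induction_on with
  | _ n ih =>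
  change ∀ {X Y : IrrGraph D} (p q : Quiver.Path X Y), _
  intro X Y p q hn heq
  cases p with
  | nil =>
    cases q with
    | nil => rfl
    | @cons V _ q' b =>
      exfalso
      simp only [Paths.lift_nil, Paths.lift_cons] at heq
      have h0 : (K.map (𝟙 ((irrPrefunctor D).obj X))).length = 0 := by
        rw [K.map_id]; rfl
      rw [heq] at h0
      erw [len_comp K] at h0
      have := one_le_len K F' hretr ((irrPrefunctor D).map b) b.2.1
      exact absurd (Nat.eq_zero_of_add_eq_zero h0).2 (Nat.one_le_iff_ne_zero.mp this)
  | @cons U _ p' a =>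
    cases q with
    | nil =>
      exfalso
      simp only [Paths.lift_nil, Paths.lift_cons] at heq
      have h0 : (K.map (𝟙 ((irrPrefunctor D).obj X))).length = 0 := by
        rw [K.map_id]; rfl
      rw [← heq] at h0
      erw [len_comp K] at h0
      have := one_le_len K F' hretr ((irrPrefunctor D).map a) a.2.1
      exact absurd (Nat.eq_zero_of_add_eq_zero h0).2 (Nat.one_le_iff_ne_zero.mp this)
    | @cons V _ q' b =>
      simp only [Paths.lift_cons] at heq hn
      erw [len_comp K] at hn
      have la := one_le_len K F' hretr ((irrPrefunctor D).map a) a.2.1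
      rcases le_total ((K.map ((irrPrefunctor D).map a)).length)
          ((K.map ((irrPrefunctor D).map b)).length) with hle | hle
      · obtain ⟨e, hba, hPQ⟩ := key K F' hretr _ ((irrPrefunctor D).map a) _
          ((irrPrefunctor D).map b) a.2 b.2 heq hle
        have e' : V = U := e
        subst e'
        have hab : a = b := by
          apply Subtype.ext
          have : b.1 = a.1 := hba.trans (by erw [eqToHom_refl, Category.id_comp]; rfl)
          exact this.symm
        have hPQ' : (Paths.lift (irrPrefunctor D)).map p' =
            (Paths.lift (irrPrefunctor D)).map q' := hPQ.trans (Category.comp_id _)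
        have hp'q' : p' = q' := ih _ (by rw [← hn]; exact Nat.lt_add_of_pos_right la) p' q' rfl hPQ'
        rw [hp'q', hab]
      · obtain ⟨e, hab, hQP⟩ := key K F' hretr _ ((irrPrefunctor D).map b) _
          ((irrPrefunctor D).map a) b.2 a.2 heq.symm hle
        have e' : U = V := e
        subst e'
        have hab' : a = b := by
          apply Subtype.ext
          exact hab.trans (by erw [eqToHom_refl, Category.id_comp]; rfl)
        have hPQ' : (Paths.lift (irrPrefunctor D)).map p' =
            (Paths.lift (irrPrefunctor D)).map q' := by
          have := hQP
          exact (hQP.trans (Category.comp_id _)).symm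
        have hp'q' : p' = q' := ih _ (by rw [← hn]; exact Nat.lt_add_of_pos_right la) p' q' rfl hPQ'
        rw [hp'q', hab']

end Aux

/-- if `𝒟` is a retract of the free category `G*` on a graph `G` (i.e.
there are functors `K : 𝒟 ⥤ G*` and `F' : G* ⥤ 𝒟` with `K ⋙ F' = 𝟭 𝒟`), then the
canonical functor from the free category on the graph `H` of irreducible arrows of `𝒟`
to `𝒟` is an isomorphism of categories (fully faithful and bijective on objects). -/
theorem retract_of_free_category_is_free
    {G : Type w} [Quiver.{v} G] {D : Type u} [Category.{v} D]
    (K : D ⥤ Paths G) (F' : Paths G ⥤ D) (hretr : K ⋙ F' = 𝟭 D) :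
    (Paths.lift (irrPrefunctor D)).Full ∧
    (Paths.lift (irrPrefunctor D)).Faithful ∧
    Function.Bijective (Paths.lift (irrPrefunctor D)).obj := by
  refine ⟨⟨fun {X Y} f => decompose K F' hretr (K.map f).length f rfl⟩,
    ⟨fun {X Y} p q h => faith K F' hretr _ p q rfl h⟩,
    fun a b h => h, fun b => ⟨b, rfl⟩⟩
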